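/- Let (G,X) be a strongly marked group with Property D. Let x, y ∈ X with x ≠ y, a a nonzero exponent modulo o(x), b a nonzero exponent modulo o(y), and m ≥ 3. Assume xy ≠ yx, \overline{[x^a,y^b]}_m = \overline{[y^b,x^a]}_m, and lg_{S(X)}(\overline{[x^a,y^b]}_m) = m. Then the orders o(x) and o(y) are both finite and even, a = o(x)/2, and b = o(y)/2. Moreover m is unique: if n ≥ 2 also satisfies \overline{[x^a,y^b]}_n = \overline{[y^b,x^a]}_n and lg_{S(X)}(\overline{[x^a,y^b]}_n) = n, then n = m. -/

import Mathlib

namespace Paper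

/-- The alternating list `(a, b, a, b, ...)` of length `m`. -/
def altList {α : Type*} (a b : α) : ℕ → List α
  | 0 => []
  | n + 1 => a :: altList b a n

/-- The alternating product `a b a ⋯` of length `m` in a monoid. -/
def altProd {G : Type*} [Monoid G] (a b : G) (m : ℕ) : G := (altList a b m).prod

variable {G : Type*} [Group G]

/-- The set of syllables of a generating set `X`: nontrivial powers of elements of `X`. -/
def Syll (X : Set G) : Set G := {s | ∃ x ∈ X, ∃ a : ℤ, s = x ^ a ∧ s ≠ 1}

/-- A syllabic word: a list all of whose entries are syllables. -/
def SylWord (X : Set G) (w : List G) : Prop := ∀ s ∈ w, s ∈ Syll X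

/-- The syllabic length of an element: minimal length of a syllabic word representing it. -/
noncomputable def sylLen (X : Set G) (g : G) : ℕ :=
  sInf {n | ∃ w : List G, SylWord X w ∧ w.prod = g ∧ w.length = n}

/-- A syllabic word is reduced if its length is the syllabic length of the element
it represents. -/
def Reduced (X : Set G) (w : List G) : Prop :=
  SylWord X w ∧ w.length = sylLen X w.prod

/-- Elementary M-operation of type I. -/
def MOpI (X : Set G) (w w' : List G) : Prop :=
  ∃ (w₁ w₂ : List G) (s t : G), s ∈ Syll X ∧ t ∈ Syll X ∧
    w = w₁ ++ [s, t] ++ w₂ ∧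
    ((s * t ∈ Syll X ∧ w' = w₁ ++ [s * t] ++ w₂) ∨ (s * t = 1 ∧ w' = w₁ ++ w₂))

/-- Elementary M-operation of type II. -/
def MOpII (X : Set G) (w w' : List G) : Prop :=
  ∃ (w₁ w₂ : List G) (s t : G) (m : ℕ), s ∈ Syll X ∧ t ∈ Syll X ∧ 2 ≤ m ∧
    altProd s t m = altProd t s m ∧ sylLen X (altProd s t m) = m ∧
    w = w₁ ++ altList s t m ++ w₂ ∧ w' = w₁ ++ altList t s m ++ w₂

/-- Elementary M-operation (of type I or type II). -/
def MOp (X : Set G) (w w' : List G) : Prop := MOpI X w w' ∨ MOpII X w w'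

/-- A syllabic word is M-reduced if its length cannot be shortened by any finite
sequence of elementary M-operations. -/
def MReduced (X : Set G) (w : List G) : Prop :=
  ∀ w', Relation.ReflTransGen (MOp X) w w' → ¬ w'.length < w.length

/-- Property D: a syllabic word is reduced iff it is M-reduced, and any two reduced
syllabic words representing the same element are connected by a finite sequence of
elementary M-operations of type II. -/
def PropertyD (X : Set G) : Prop :=
  (∀ w : List G, SylWord X w → (Reduced X w ↔ MReduced X w)) ∧
  (∀ w w' : List G, Reduced X w → Reduced X w' → w.prod = w'.prod →
    Relation.ReflTransGen (MOpII X) w w')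

/-- `(G, X)` is a marked group: `X` generates `G`. -/
def Marked (X : Set G) : Prop := Subgroup.closure X = ⊤

/-- `(G, X)` is a strongly marked group. -/
def StronglyMarked (X : Set G) : Prop :=
  Marked X ∧ (1 : G) ∉ X ∧
    ∀ x ∈ X, ∀ y ∈ X, ∀ a b : ℤ, x ^ a ≠ 1 → y ^ b ≠ 1 →
      (x ^ a * y ^ b ∈ Syll X ∨ x ^ a * y ^ b = 1) → x = y

/-- The data of a Dyer graph: a simplicial graph with edge labels `m ≥ 2` and vertex
labels `f ∈ ℕ_{≥2} ∪ {∞}` such that any edge with `m(e) ≠ 2` has both endpoints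
labelled `2`. -/
structure DyerData (V : Type*) where
  adj : V → V → Prop
  symm : ∀ u v, adj u v → adj v u
  loopless : ∀ v, ¬ adj v v
  m : V → V → ℕ
  m_symm : ∀ u v, m u v = m v u
  m_two_le : ∀ u v, adj u v → 2 ≤ m u v
  f : V → ℕ∞
  f_two_le : ∀ v, 2 ≤ f v
  dyer : ∀ u v, adj u v → m u v ≠ 2 → f u = 2 ∧ f v = 2

/-- The defining relators of the Dyer group of `Δ`. -/
def DyerData.rels {V : Type*} (Δ : DyerData V) : Set (FreeGroup V) :=
  {r | ∃ v, Δ.f v ≠ ⊤ ∧ r = (FreeGroup.of v) ^ (Δ.f v).toNat} ∪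
  {r | ∃ u v, Δ.adj u v ∧
    r = altProd (FreeGroup.of u) (FreeGroup.of v) (Δ.m u v) *
        (altProd (FreeGroup.of v) (FreeGroup.of u) (Δ.m u v))⁻¹}

/-- The Dyer group of the data `Δ`. -/
abbrev DyerGroup {V : Type*} (Δ : DyerData V) := PresentedGroup Δ.rels

/-- The standard generating set of a Dyer group. -/
def DyerGens {V : Type*} (Δ : DyerData V) : Set (DyerGroup Δ) :=
  Set.range (PresentedGroup.of (rels := Δ.rels))


section AltBasics
variable {α : Type*}

lemma altList_length (a b : α) : ∀ n, (altList a b n).length = n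
  | 0 => rfl
  | n + 1 => by simp [altList, altList_length _ _ n]

lemma mem_altList {a b c : α} : ∀ {n}, c ∈ altList a b n → c = a ∨ c = b
  | 0, h => by simp [altList] at h
  | n + 1, h => by
    rcases List.mem_cons.1 h with h | h
    · exact Or.inl h
    · exact (mem_altList h).symm

lemma self_mem_altList (a b : α) {n : ℕ} (hn : 1 ≤ n) : a ∈ altList a b n := by
  obtain ⟨k, rfl⟩ := Nat.exists_eq_add_of_le' hn
  exact List.mem_cons_self

lemma snd_mem_altList (a b : α) {n : ℕ} (hn : 2 ≤ n) : b ∈ altList a b n := by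
  obtain ⟨k, rfl⟩ := Nat.exists_eq_add_of_le' hn
  show b ∈ a :: b :: altList a b k
  exact List.mem_cons.2 (Or.inr (List.mem_cons_self))

lemma altList_getElem (a b : α) : ∀ (n i : ℕ) (h : i < n),
    (altList a b n)[i]'(by rw [altList_length]; exact h) = if Even i then a else b
  | n + 1, 0, _ => by simp [altList]
  | n + 1, i + 1, h => by
    have := altList_getElem b a n i (by omega)
    simp only [altList, List.getElem_cons_succ, this, Nat.even_add_one]
    by_cases hi : Even i <;> simp [hi]

lemma altList_add (a b : α) (k r : ℕ) :
    altList a b (k + r) = altList a b k ++ (if Even k then altList a b r else altList b a r) := by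
  induction k generalizing a b with
  | zero => simp [altList]
  | succ k ih =>
    have : k + 1 + r = (k + r) + 1 := by omega
    rw [this, altList, altList, ih b a]
    by_cases hk : Even k <;> simp [hk, Nat.even_add_one]

lemma altList_snoc (a b : α) (n : ℕ) :
    altList a b (n + 1) = altList a b n ++ [if Even n then a else b] := by
  rw [altList_add a b n 1]
  by_cases hn : Even n <;> simp [hn, altList]

end AltBasics

section AltProd
variable {M : Type*} [Monoid M]

lemma altProd_succ (a b : M) (n : ℕ) : altProd a b (n + 1) = a * altProd b a n := by
  simp [altProd, altList]

lemma altProd_snoc (a b : M) (n : ℕ) :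
    altProd a b (n + 1) = altProd a b n * (if Even n then a else b) := by
  rw [altProd, altList_snoc, List.prod_append]
  simp [altProd]

lemma altProd_add (a b : M) (k r : ℕ) :
    altProd a b (k + r) = altProd a b k * (if Even k then altProd a b r else altProd b a r) := by
  rw [altProd, altList_add, List.prod_append]
  by_cases hk : Even k <;> simp [hk, altProd]

end AltProd

lemma altProd_zpow {G : Type*} [Group G] (x : G) (α β : ℤ) :
    ∀ k : ℕ, ∃ γ : ℤ, altProd (x ^ α) (x ^ β) k = x ^ γ
  | 0 => ⟨0, by simp [altProd, altList]⟩
  | k + 1 => by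
    obtain ⟨γ, hγ⟩ := altProd_zpow x β α k
    exact ⟨α + γ, by rw [altProd_succ, hγ, zpow_add]⟩
section SylBasics
variable {G : Type*} [Group G] {X : Set G}

lemma syll_of_zpow {x : G} (hx : x ∈ X) {γ : ℤ} (h : x ^ γ ≠ 1) : x ^ γ ∈ Syll X :=
  ⟨x, hx, γ, rfl, h⟩

lemma syll_ne_one {u : G} (h : u ∈ Syll X) : u ≠ 1 := by
  obtain ⟨x, hx, γ, rfl, hne⟩ := h
  exact hne

lemma syll_inv {u : G} (h : u ∈ Syll X) : u⁻¹ ∈ Syll X := by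
  obtain ⟨x, hx, γ, rfl, hne⟩ := h
  exact ⟨x, hx, -γ, by rw [zpow_neg], by simpa using hne⟩

lemma sylWord_altList {s t : G} (hs : s ∈ Syll X) (ht : t ∈ Syll X) (n : ℕ) :
    SylWord X (altList s t n) := by
  intro u hu
  rcases mem_altList hu with rfl | rfl
  · exact hs
  · exact ht

lemma exists_sylWord (hM : Marked X) (h1 : (1 : G) ∉ X) (g : G) :
    ∃ w : List G, SylWord X w ∧ w.prod = g := by
  have key : ∀ g ∈ Subgroup.closure X, ∃ w : List G, SylWord X w ∧ w.prod = g := by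
    intro g hg
    induction hg using Subgroup.closure_induction with
    | mem z hz =>
      refine ⟨[z], ?_, by simp⟩
      intro u hu
      simp only [List.mem_singleton] at hu
      subst hu
      exact ⟨u, hz, 1, (zpow_one u).symm, fun h => h1 (h ▸ hz)⟩
    | one => exact ⟨[], by intro u hu; simp at hu, rfl⟩
    | mul u v _ _ ihu ihv =>
      obtain ⟨w₁, hw₁, rfl⟩ := ihu
      obtain ⟨w₂, hw₂, rfl⟩ := ihv
      exact ⟨w₁ ++ w₂, fun s hs => by
        rcases List.mem_append.1 hs with h | h
        · exact hw₁ s h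
        · exact hw₂ s h, by rw [List.prod_append]⟩
    | inv u _ ihu =>
      obtain ⟨w, hw, rfl⟩ := ihu
      refine ⟨(w.map (·⁻¹)).reverse, ?_, ?_⟩
      · intro s hs
        simp only [List.mem_reverse, List.mem_map] at hs
        obtain ⟨v, hv, rfl⟩ := hs
        exact syll_inv (hw v hv)
      · rw [List.prod_reverse_noncomm]
        simp
  exact key g (by rw [hM]; trivial)

lemma sylLen_le {w : List G} (hw : SylWord X w) : sylLen X w.prod ≤ w.length :=
  Nat.sInf_le ⟨w, hw, rfl, rfl⟩

lemma sylLen_le_of_eq {w : List G} {g : G} (hw : SylWord X w) (hg : w.prod = g) :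
    sylLen X g ≤ w.length :=
  Nat.sInf_le ⟨w, hw, hg, rfl⟩

lemma exists_reduced_word (hM : Marked X) (h1 : (1 : G) ∉ X) (g : G) :
    ∃ w : List G, SylWord X w ∧ w.prod = g ∧ w.length = sylLen X g := by
  have hne : {n : ℕ | ∃ w : List G, SylWord X w ∧ w.prod = g ∧ w.length = n}.Nonempty := by
    obtain ⟨w, hw, hp⟩ := exists_sylWord hM h1 g
    exact ⟨w.length, w, hw, hp, rfl⟩
  obtain ⟨w, hw, hp, hl⟩ := Nat.sInf_mem hne
  exact ⟨w, hw, hp, hl⟩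

lemma sylLen_mul_le (hM : Marked X) (h1 : (1 : G) ∉ X) (g h : G) :
    sylLen X (g * h) ≤ sylLen X g + sylLen X h := by
  obtain ⟨w₁, hw₁, hp₁, hl₁⟩ := exists_reduced_word hM h1 g
  obtain ⟨w₂, hw₂, hp₂, hl₂⟩ := exists_reduced_word hM h1 h
  have := sylLen_le_of_eq (X := X) (w := w₁ ++ w₂) (g := g * h)
    (fun s hs => by rcases List.mem_append.1 hs with h | h
                    exacts [hw₁ s h, hw₂ s h])
    (by rw [List.prod_append, hp₁, hp₂])
  simpa [hl₁, hl₂] using this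

lemma sylLen_zpow_le {x : G} (hx : x ∈ X) (γ : ℤ) : sylLen X (x ^ γ) ≤ 1 := by
  by_cases h : x ^ γ = 1
  · rw [h]
    calc sylLen X (1 : G) ≤ ([] : List G).length :=
          sylLen_le_of_eq (by intro u hu; simp at hu) rfl
      _ ≤ 1 := by simp
  · exact sylLen_le_of_eq (w := [x ^ γ])
      (by intro u hu; simp only [List.mem_singleton] at hu; subst hu; exact syll_of_zpow hx h)
      (by simp)

lemma sylLen_syll_le {s : G} (hs : s ∈ Syll X) : sylLen X s ≤ 1 :=
  sylLen_le_of_eq (w := [s])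
    (by intro u hu; simp only [List.mem_singleton] at hu; subst hu; exact hs) (by simp)

end SylBasics
section Marking
variable {G : Type*} [Group G] {X : Set G}

lemma mul_zpow_ne_one (hSM : StronglyMarked X) {x y : G} (hx : x ∈ X) (hy : y ∈ X)
    (hxy : x ≠ y) {α β : ℤ} (hα : x ^ α ≠ 1) (hβ : y ^ β ≠ 1) : x ^ α * y ^ β ≠ 1 :=
  fun h => hxy (hSM.2.2 x hx y hy α β hα hβ (Or.inr h))

lemma zpow_ne_zpow (hSM : StronglyMarked X) {x y : G} (hx : x ∈ X) (hy : y ∈ X)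
    (hxy : x ≠ y) {α β : ℤ} (hα : x ^ α ≠ 1) (hβ : y ^ β ≠ 1) : x ^ α ≠ y ^ β := by
  intro h
  refine mul_zpow_ne_one hSM hx hy hxy hα (β := -β) (by simpa using hβ) ?_
  rw [h, zpow_neg, mul_inv_cancel]

end Marking

section Invariant
variable {G : Type*} [Group G] {X : Set G}

lemma MOpII_mem_subset {L : Set G} {w w' : List G} (h : MOpII X w w')
    (hw : ∀ l ∈ w, l ∈ L) : ∀ l ∈ w', l ∈ L := by
  obtain ⟨w₁, w₂, p, q, k, _, _, hk2, _, _, hw_eq, hw'_eq⟩ := h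
  have hp : p ∈ L := hw p (by
    rw [hw_eq]
    exact List.mem_append.2 (Or.inl (List.mem_append.2 (Or.inr
      (self_mem_altList p q (by omega))))))
  have hq : q ∈ L := hw q (by
    rw [hw_eq]
    exact List.mem_append.2 (Or.inl (List.mem_append.2 (Or.inr
      (snd_mem_altList p q hk2)))))
  intro l hl
  rw [hw'_eq] at hl
  rcases List.mem_append.1 hl with hl | hl
  · rcases List.mem_append.1 hl with hl | hl
    · exact hw l (by rw [hw_eq]; exact List.mem_append.2 (Or.inl (List.mem_append.2 (Or.inl hl))))
    · rcases mem_altList hl with rfl | rfl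
      exacts [hq, hp]
  · exact hw l (by rw [hw_eq]; exact List.mem_append.2 (Or.inr hl))

lemma reflTransGen_MOpII_mem_subset {L : Set G} {w w' : List G}
    (h : Relation.ReflTransGen (MOpII X) w w') (hw : ∀ l ∈ w, l ∈ L) : ∀ l ∈ w', l ∈ L := by
  induction h with
  | refl => exact hw
  | tail _ hstep ih => exact MOpII_mem_subset hstep ih

end Invariant
section NoBraid
variable {G : Type*} [Group G] {X : Set G}

lemma shorten_with_square {g d : G} (hd : d * d = 1 ∨ d * d ∈ Syll X) {w₁ w₂ : List G}
    (h₁ : SylWord X w₁) (h₂ : SylWord X w₂) (hg : g = w₁.prod * (d * d) * w₂.prod) :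
    sylLen X g ≤ w₁.length + w₂.length + 1 := by
  rcases hd with hd | hd
  · have : sylLen X g ≤ (w₁ ++ w₂).length := by
      refine sylLen_le_of_eq (fun s hs => ?_) ?_
      · rcases List.mem_append.1 hs with h | h
        exacts [h₁ s h, h₂ s h]
      · rw [List.prod_append, hg, hd, mul_one]
    simpa using Nat.le_succ_of_le (by simpa using this)
  · have : sylLen X g ≤ (w₁ ++ [d * d] ++ w₂).length := by
      refine sylLen_le_of_eq (fun s hs => ?_) ?_
      · rcases List.mem_append.1 hs with h | h
        · rcases List.mem_append.1 h with h | h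
          · exact h₁ s h
          · simp only [List.mem_singleton] at h; subst h; exact hd
        · exact h₂ s h
      · rw [List.prod_append, List.prod_append, hg]
        simp [mul_assoc]
    simpa using le_trans this (by simp; omega)

lemma no_braid_below {x y : G} (hx : x ∈ X) (hy : y ∈ X)
    {a b : ℤ} (ha : x ^ a ≠ 1) (hb : y ^ b ≠ 1) {N k : ℕ} (hk2 : 2 ≤ k) (hkN : k < N)
    (hlenN : sylLen X (altProd (x ^ a) (y ^ b) N) = N)
    (hrel : altProd (x ^ a) (y ^ b) k = altProd (y ^ b) (x ^ a) k) : False := by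
  set s := x ^ a with hs_def
  set t := y ^ b with ht_def
  have hs : s ∈ Syll X := syll_of_zpow hx ha
  have ht : t ∈ Syll X := syll_of_zpow hy hb
  have hss : s * s = 1 ∨ s * s ∈ Syll X := by
    by_cases h : s * s = 1
    · exact Or.inl h
    · refine Or.inr ⟨x, hx, a + a, ?_, h⟩
      rw [zpow_add]
  have htt : t * t = 1 ∨ t * t ∈ Syll X := by
    by_cases h : t * t = 1
    · exact Or.inl h
    · refine Or.inr ⟨y, hy, b + b, ?_, h⟩
      rw [zpow_add]
  have hNsplit : N = k + (N - k) := by omega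
  have h1 : altProd s t N = altProd t s k *
      (if Even k then altProd s t (N - k) else altProd t s (N - k)) := by
    conv_lhs => rw [hNsplit, altProd_add]
    rw [hrel]
  have hksplit : k = (k - 1) + 1 := by omega
  have hsnoc : altProd t s k = altProd t s (k - 1) * (if Even (k - 1) then t else s) := by
    conv_lhs => rw [hksplit, altProd_snoc]
  have hNk : N - k = (N - k - 1) + 1 := by omega
  have hlen' : sylLen X (altProd s t N) ≤ N - 1 := by
    by_cases hk : Even k
    · have hk1 : ¬ Even (k - 1) := by
        rcases hk with ⟨j, rfl⟩
        simp [Nat.even_sub, Nat.odd_iff]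
        omega
      have hT : altProd s t (N - k) = s * altProd t s (N - k - 1) := by
        conv_lhs => rw [hNk, altProd_succ]
      have hg : altProd s t N =
          (altList t s (k - 1)).prod * (s * s) * (altList t s (N - k - 1)).prod := by
        rw [h1, if_pos hk, hsnoc, if_neg hk1, hT]
        simp only [altProd, mul_assoc]
      have := shorten_with_square hss (sylWord_altList ht hs (k - 1))
        (sylWord_altList ht hs (N - k - 1)) hg
      rw [altList_length, altList_length] at this
      omega
    · have hk1 : Even (k - 1) := by
        rw [Nat.even_sub (by omega)]
        simpa using hk
      have hT : altProd t s (N - k) = t * altProd s t (N - k - 1) := by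
        conv_lhs => rw [hNk, altProd_succ]
      have hg : altProd s t N =
          (altList t s (k - 1)).prod * (t * t) * (altList s t (N - k - 1)).prod := by
        rw [h1, if_neg hk, hsnoc, if_pos hk1, hT]
        simp only [altProd, mul_assoc]
      have := shorten_with_square htt (sylWord_altList ht hs (k - 1))
        (sylWord_altList hs ht (N - k - 1)) hg
      rw [altList_length, altList_length] at this
      omega
  omega

end NoBraid
section StepAnalysis
variable {G : Type*} [Group G] {X : Set G}

lemma seg_getElem? {α : Type*} {w₁ w₂ L A : List α} (hw : A = w₁ ++ L ++ w₂) {i : ℕ}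
    (hi : i < L.length) : A[w₁.length + i]? = L[i]? := by
  subst hw
  rw [List.getElem?_append_left (by simp only [List.length_append]; omega),
      List.getElem?_append_right (by omega)]
  congr 1
  omega

lemma altList_getElem? {α : Type*} (a b : α) (n i : ℕ) (h : i < n) :
    (altList a b n)[i]? = some (if Even i then a else b) := by
  rw [List.getElem?_eq_getElem (by rw [altList_length]; exact h), altList_getElem a b n i h]

lemma step_from_A {x y : G} (hSM : StronglyMarked X) (hx : x ∈ X) (hy : y ∈ X) (hxy : x ≠ y)
    {a b : ℤ} (ha : x ^ a ≠ 1) (hb : y ^ b ≠ 1) {m : ℕ} (hm : 3 ≤ m)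
    (hlen : sylLen X (altProd (x ^ a) (y ^ b) m) = m) {w' : List G}
    (hop : MOpII X ((x ^ a * x ^ a) :: altList (y ^ b) (x ^ a) (m - 1)) w') :
    w' = y ^ b :: (x ^ a * x ^ a) :: altList (x ^ a) (y ^ b) (m - 2) := by
  obtain ⟨w₁, w₂, p, q, k, hp, hq, hk2, hrel, hslen, hw, hw'⟩ := hop
  have hlens := congrArg List.length hw
  simp only [List.length_append, altList_length, List.length_cons] at hlens
  have hjk : w₁.length + k + w₂.length = m := by omega
  have htail : altList (y ^ b) (x ^ a) (m - 1) = y ^ b :: altList (x ^ a) (y ^ b) (m - 2) := by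
    rw [show m - 1 = (m - 2) + 1 from by omega]
    rfl
  have hvalA : ∀ i : ℕ, i + 1 < m →
      ((x ^ a * x ^ a) :: altList (y ^ b) (x ^ a) (m - 1))[i + 1]?
        = some (if Even i then y ^ b else x ^ a) := by
    intro i hi
    rw [List.getElem?_cons_succ, altList_getElem? _ _ _ _ (by omega)]
  have hseg : ∀ i : ℕ, i < k →
      ((x ^ a * x ^ a) :: altList (y ^ b) (x ^ a) (m - 1))[w₁.length + i]?
        = some (if Even i then p else q) := by
    intro i hik
    rw [seg_getElem? hw (by rw [altList_length]; exact hik), altList_getElem? _ _ _ _ hik]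
  rcases Nat.eq_zero_or_pos w₁.length with hj0 | hj1
  · -- segment starts at position 0
    have hw₁ : w₁ = [] := List.length_eq_zero_iff.1 hj0
    have hpv : p = x ^ a * x ^ a := by
      have h0 := hseg 0 (by omega)
      rw [hj0, List.getElem?_cons_zero, if_pos Even.zero] at h0
      exact (Option.some.inj h0).symm
    have hqv : q = y ^ b := by
      have h1 := hseg 1 (by omega)
      rw [hj0, if_neg Nat.not_even_one] at h1
      rw [hvalA 0 (by omega), if_pos Even.zero] at h1
      exact (Option.some.inj h1).symm
    have hk3 : ¬ 3 ≤ k := by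
      intro hk3
      have h2 := hseg 2 (by omega)
      rw [hj0, if_pos (by norm_num)] at h2
      rw [hvalA 1 (by omega), if_neg Nat.not_even_one] at h2
      have : x ^ a = x ^ a * x ^ a := by
        rw [← hpv]; exact Option.some.inj h2
      have h1x : (1 : G) * x ^ a = x ^ a * x ^ a := by rw [one_mul]; exact this
      exact ha (mul_right_cancel h1x).symm
    have hkeq : k = 2 := by omega
    subst hkeq
    have hseq : altList p q 2 = [p, q] := rfl
    rw [hw₁, hseq, List.nil_append] at hw
    rw [htail] at hw
    have h1 : x ^ a * x ^ a = p := (List.cons.injEq _ _ _ _ ▸ hw).1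
    have hw2 := (List.cons.injEq _ _ _ _ ▸ hw).2
    have h2 : y ^ b = q := (List.cons.injEq _ _ _ _ ▸ hw2).1
    have h3 : altList (x ^ a) (y ^ b) (m - 2) = w₂ := (List.cons.injEq _ _ _ _ ▸ hw2).2
    rw [hw', hw₁, List.nil_append, show altList q p 2 = [q, p] from rfl, ← h1, ← h2, ← h3]
    rfl
  · -- segment inside the alternating tail : impossible
    exfalso
    have hjm : w₁.length < m := by omega
    have hj' : w₁.length - 1 + 1 = w₁.length := by omega
    have hpv : p = (if Even (w₁.length - 1) then y ^ b else x ^ a) := by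
      have h0 := hseg 0 (by omega)
      rw [Nat.add_zero, if_pos Even.zero] at h0
      have h1 := hvalA (w₁.length - 1) (by omega)
      rw [hj'] at h1
      rw [h1] at h0
      exact (Option.some.inj h0).symm
    have hqv : q = (if Even w₁.length then y ^ b else x ^ a) := by
      have h0 := hseg 1 (by omega)
      rw [if_neg Nat.not_even_one] at h0
      rw [hvalA w₁.length (by omega)] at h0
      exact Option.some.inj h0.symm
    have hkm : k < m := by omega
    by_cases h1 : Even (w₁.length - 1)
    · rw [if_pos h1] at hpv
      by_cases h2 : Even w₁.length
      · rw [if_pos h2] at hqv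
        obtain ⟨γ, hγ⟩ := altProd_zpow y b b k
        rw [hpv, hqv, hγ] at hslen
        have := sylLen_zpow_le (X := X) hy γ
        omega
      · rw [if_neg h2] at hqv
        rw [hpv, hqv] at hrel
        exact no_braid_below hx hy ha hb hk2 hkm hlen hrel.symm
    · rw [if_neg h1] at hpv
      by_cases h2 : Even w₁.length
      · rw [if_pos h2] at hqv
        rw [hpv, hqv] at hrel
        exact no_braid_below hx hy ha hb hk2 hkm hlen hrel
      · rw [if_neg h2] at hqv
        obtain ⟨γ, hγ⟩ := altProd_zpow x a a k
        rw [hpv, hqv, hγ] at hslen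
        have := sylLen_zpow_le (X := X) hx γ
        omega

end StepAnalysis
section StepAnalysisII
variable {G : Type*} [Group G] {X : Set G}

lemma step_from_A' {x y : G} (hSM : StronglyMarked X) (hx : x ∈ X) (hy : y ∈ X) (hxy : x ≠ y)
    {a b : ℤ} (ha : x ^ a ≠ 1) (hb : y ^ b ≠ 1) {m : ℕ} (hm : 3 ≤ m)
    (hlen : sylLen X (altProd (x ^ a) (y ^ b) m) = m) {w' : List G}
    (hop : MOpII X (y ^ b :: (x ^ a * x ^ a) :: altList (x ^ a) (y ^ b) (m - 2)) w') :
    w' = (x ^ a * x ^ a) :: altList (y ^ b) (x ^ a) (m - 1) := by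
  obtain ⟨w₁, w₂, p, q, k, hp, hq, hk2, hrel, hslen, hw, hw'⟩ := hop
  have hlens := congrArg List.length hw
  simp only [List.length_append, altList_length, List.length_cons] at hlens
  have hjk : w₁.length + k + w₂.length = m := by omega
  have htail : altList (y ^ b) (x ^ a) (m - 1) = y ^ b :: altList (x ^ a) (y ^ b) (m - 2) := by
    rw [show m - 1 = (m - 2) + 1 from by omega]
    rfl
  have hvalA : ∀ i : ℕ, i + 2 < m →
      (y ^ b :: (x ^ a * x ^ a) :: altList (x ^ a) (y ^ b) (m - 2))[i + 2]?
        = some (if Even i then x ^ a else y ^ b) := by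
    intro i hi
    rw [show i + 2 = (i + 1) + 1 from rfl, List.getElem?_cons_succ, List.getElem?_cons_succ,
      altList_getElem? _ _ _ _ (by omega)]
  have hseg : ∀ i : ℕ, i < k →
      (y ^ b :: (x ^ a * x ^ a) :: altList (x ^ a) (y ^ b) (m - 2))[w₁.length + i]?
        = some (if Even i then p else q) := by
    intro i hik
    rw [seg_getElem? hw (by rw [altList_length]; exact hik), altList_getElem? _ _ _ _ hik]
  rcases Nat.lt_or_ge w₁.length 2 with hjsmall | hj2
  · rcases Nat.lt_or_ge w₁.length 1 with hj0' | hj1'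
    · -- j = 0
      have hj0 : w₁.length = 0 := by omega
      have hw₁ : w₁ = [] := List.length_eq_zero_iff.1 hj0
      have hpv : p = y ^ b := by
        have h0 := hseg 0 (by omega)
        rw [hj0, List.getElem?_cons_zero, if_pos Even.zero] at h0
        exact (Option.some.inj h0).symm
      have hqv : q = x ^ a * x ^ a := by
        have h1 := hseg 1 (by omega)
        rw [hj0, if_neg Nat.not_even_one, show (0 + 1 : ℕ) = 0 + 1 + 0 from rfl] at h1
        rw [show (0 + 1 + 0 : ℕ) = 1 from rfl, List.getElem?_cons_succ,
          List.getElem?_cons_zero] at h1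
        exact (Option.some.inj h1).symm
      have hk3 : ¬ 3 ≤ k := by
        intro hk3
        have h2 := hseg 2 (by omega)
        rw [hj0, if_pos (by norm_num)] at h2
        rw [show (0 + 2 : ℕ) = 0 + 2 from rfl, hvalA 0 (by omega), if_pos Even.zero] at h2
        have : x ^ a = p := Option.some.inj h2
        rw [hpv] at this
        exact zpow_ne_zpow hSM hx hy hxy ha hb this
      have hkeq : k = 2 := by omega
      subst hkeq
      rw [hw₁, show altList p q 2 = [p, q] from rfl, List.nil_append] at hw
      have h1 : y ^ b = p := (List.cons.injEq _ _ _ _ ▸ hw).1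
      have hw2 := (List.cons.injEq _ _ _ _ ▸ hw).2
      have h2 : x ^ a * x ^ a = q := (List.cons.injEq _ _ _ _ ▸ hw2).1
      have h3 : altList (x ^ a) (y ^ b) (m - 2) = w₂ := (List.cons.injEq _ _ _ _ ▸ hw2).2
      rw [hw', hw₁, List.nil_append, show altList q p 2 = [q, p] from rfl, ← h1, ← h2, ← h3,
        htail]
      rfl
    · -- j = 1 : segment starts at the square : impossible
      exfalso
      have hj1 : w₁.length = 1 := by omega
      have hpv : p = x ^ a * x ^ a := by
        have h0 := hseg 0 (by omega)
        rw [hj1, Nat.add_zero, if_pos Even.zero, show (1 : ℕ) = 0 + 1 from rfl,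
          List.getElem?_cons_succ, List.getElem?_cons_zero] at h0
        exact (Option.some.inj h0).symm
      have hqv : q = x ^ a := by
        have h0 := hseg 1 (by omega)
        rw [hj1, if_neg Nat.not_even_one, show (1 + 1 : ℕ) = 0 + 2 from rfl,
          hvalA 0 (by omega), if_pos Even.zero] at h0
        exact (Option.some.inj h0).symm
      obtain ⟨γ, hγ⟩ := altProd_zpow x (a + a) a k
      rw [hpv, hqv, ← zpow_add x a a] at hslen
      rw [hγ] at hslen
      have := sylLen_zpow_le (X := X) hx γ
      omega
  · -- j ≥ 2 : segment inside the alternating tail : impossible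
    exfalso
    have hkm : k < m := by omega
    have hj' : w₁.length - 2 + 2 = w₁.length := by omega
    have hpv : p = (if Even (w₁.length - 2) then x ^ a else y ^ b) := by
      have h0 := hseg 0 (by omega)
      rw [Nat.add_zero, if_pos Even.zero] at h0
      have h1 := hvalA (w₁.length - 2) (by omega)
      rw [hj'] at h1
      rw [h1] at h0
      exact (Option.some.inj h0).symm
    have hqv : q = (if Even (w₁.length - 1) then x ^ a else y ^ b) := by
      have h0 := hseg 1 (by omega)
      rw [if_neg Nat.not_even_one] at h0
      have h1 := hvalA (w₁.length - 1) (by omega)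
      rw [show w₁.length - 1 + 2 = w₁.length + 1 from by omega] at h1
      rw [h1] at h0
      exact (Option.some.inj h0).symm
    by_cases h1 : Even (w₁.length - 2)
    · rw [if_pos h1] at hpv
      by_cases h2 : Even (w₁.length - 1)
      · rw [if_pos h2] at hqv
        obtain ⟨γ, hγ⟩ := altProd_zpow x a a k
        rw [hpv, hqv, hγ] at hslen
        have := sylLen_zpow_le (X := X) hx γ
        omega
      · rw [if_neg h2] at hqv
        rw [hpv, hqv] at hrel
        exact no_braid_below hx hy ha hb hk2 hkm hlen hrel
    · rw [if_neg h1] at hpv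
      by_cases h2 : Even (w₁.length - 1)
      · rw [if_pos h2] at hqv
        rw [hpv, hqv] at hrel
        exact no_braid_below hx hy ha hb hk2 hkm hlen hrel.symm
      · rw [if_neg h2] at hqv
        obtain ⟨γ, hγ⟩ := altProd_zpow y b b k
        rw [hpv, hqv, hγ] at hslen
        have := sylLen_zpow_le (X := X) hy γ
        omega

lemma reach_AB {A A' B : List G} (hA : ∀ w', MOpII X A w' → w' = A')
    (hA' : ∀ w', MOpII X A' w' → w' = A) (h : Relation.ReflTransGen (MOpII X) A B) :
    B = A ∨ B = A' := by
  induction h with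
  | refl => exact Or.inl rfl
  | tail hr hstep ih =>
    rcases ih with rfl | rfl
    · exact Or.inr (hA _ hstep)
    · exact Or.inl (hA' _ hstep)

end StepAnalysisII
section KeyLemma
variable {G : Type*} [Group G] {X : Set G}

lemma square_one {x y : G} (hSM : StronglyMarked X) (hPD : PropertyD X)
    (hx : x ∈ X) (hy : y ∈ X) (hxy : x ≠ y) {a b : ℤ} (ha : x ^ a ≠ 1) (hb : y ^ b ≠ 1)
    {m : ℕ} (hm : 3 ≤ m)
    (halt : altProd (x ^ a) (y ^ b) m = altProd (y ^ b) (x ^ a) m)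
    (hlen : sylLen X (altProd (x ^ a) (y ^ b) m) = m) :
    x ^ a * x ^ a = 1 := by
  by_contra hs2
  have hM := hSM.1
  have h1X := hSM.2.1
  have hs : x ^ a ∈ Syll X := syll_of_zpow hx ha
  have ht : y ^ b ∈ Syll X := syll_of_zpow hy hb
  have hss : x ^ a * x ^ a ∈ Syll X := ⟨x, hx, a + a, (zpow_add x a a).symm, hs2⟩
  have hm1 : m - 1 + 1 = m := by omega
  have htail : altList (y ^ b) (x ^ a) (m - 1) = y ^ b :: altList (x ^ a) (y ^ b) (m - 2) := by
    rw [show m - 1 = (m - 2) + 1 from by omega]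
    rfl
  have hh1 : altProd (x ^ a) (y ^ b) (m + 1) = x ^ a * altProd (y ^ b) (x ^ a) m :=
    altProd_succ _ _ m
  have hhg : altProd (x ^ a) (y ^ b) (m + 1) = x ^ a * altProd (x ^ a) (y ^ b) m := by
    rw [hh1, ← halt]
  have hg1 : altProd (x ^ a) (y ^ b) m = x ^ a * altProd (y ^ b) (x ^ a) (m - 1) := by
    conv_lhs => rw [← hm1, altProd_succ]
  have hA : altProd (x ^ a) (y ^ b) (m + 1)
      = (x ^ a * x ^ a) * altProd (y ^ b) (x ^ a) (m - 1) := by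
    rw [hhg, hg1, ← mul_assoc]
  have hbase : Reduced X (altList (x ^ a) (y ^ b) m) := by
    refine ⟨sylWord_altList hs ht m, ?_⟩
    rw [altList_length]
    exact hlen.symm
  by_cases hcase : sylLen X (altProd (x ^ a) (y ^ b) (m + 1)) ≤ m - 1
  · -- the element h can be written with m-1 syllables
    have hge : m ≤ 1 + sylLen X (altProd (x ^ a) (y ^ b) (m + 1)) := by
      have hsplit : altProd (x ^ a) (y ^ b) m
          = (x ^ a)⁻¹ * altProd (x ^ a) (y ^ b) (m + 1) := by
        rw [hhg, inv_mul_cancel_left]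
      have h2 := sylLen_mul_le hM h1X ((x ^ a)⁻¹) (altProd (x ^ a) (y ^ b) (m + 1))
      have h3 : sylLen X ((x ^ a)⁻¹) ≤ 1 := sylLen_syll_le (syll_inv hs)
      rw [← hsplit, hlen] at h2
      omega
    obtain ⟨C, hC, hCp, hCl⟩ := exists_reduced_word hM h1X (altProd (x ^ a) (y ^ b) (m + 1))
    have hCl' : C.length = m - 1 := by omega
    have hWprod : ((x ^ (-a)) :: C).prod = altProd (x ^ a) (y ^ b) m := by
      rw [List.prod_cons, hCp, hhg, zpow_neg, inv_mul_cancel_left]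
    have hWred : Reduced X ((x ^ (-a)) :: C) := by
      refine ⟨?_, ?_⟩
      · intro u hu
        rcases List.mem_cons.1 hu with rfl | hu
        · exact syll_of_zpow hx (by simpa [zpow_neg] using ha)
        · exact hC u hu
      · show _ = sylLen X ((x ^ (-a) :: C).prod)
        rw [hWprod, hlen]
        simp only [List.length_cons, hCl']
        omega
    have hchain := hPD.2 _ _ hbase hWred (by
      show (altList (x ^ a) (y ^ b) m).prod = _
      rw [hWprod]
      rfl)
    have hmem := reflTransGen_MOpII_mem_subset (L := {u : G | u = x ^ a ∨ u = y ^ b}) hchain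
      (fun l hl => mem_altList hl) (x ^ (-a)) (List.mem_cons_self)
    rcases hmem with h | h
    · apply hs2
      have h' : x ^ a * x ^ a = x ^ a * x ^ (-a) := by rw [h]
      rw [h', ← zpow_add]
      simp
    · exact zpow_ne_zpow hSM hx hy hxy (by simpa [zpow_neg] using ha) hb h
  · -- sylLen h = m : two distinct reduced expressions joined by type II moves
    have hWAprod : ((x ^ a * x ^ a) :: altList (y ^ b) (x ^ a) (m - 1)).prod
        = altProd (x ^ a) (y ^ b) (m + 1) := by
      rw [List.prod_cons]
      exact hA.symm
    have hWAsyl : SylWord X ((x ^ a * x ^ a) :: altList (y ^ b) (x ^ a) (m - 1)) := by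
      intro u hu
      rcases List.mem_cons.1 hu with rfl | hu
      · exact hss
      · exact sylWord_altList ht hs (m - 1) u hu
    have hWAlen : ((x ^ a * x ^ a) :: altList (y ^ b) (x ^ a) (m - 1)).length = m := by
      simp only [List.length_cons, altList_length]
      omega
    have hhle : sylLen X (altProd (x ^ a) (y ^ b) (m + 1)) ≤ m := by
      have := sylLen_le_of_eq hWAsyl hWAprod
      rw [hWAlen] at this
      exact this
    have hhm : sylLen X (altProd (x ^ a) (y ^ b) (m + 1)) = m := by omega
    have hWAred : Reduced X ((x ^ a * x ^ a) :: altList (y ^ b) (x ^ a) (m - 1)) := by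
      refine ⟨hWAsyl, ?_⟩
      rw [hWAprod, hhm, hWAlen]
    set c : G := if Even m then x ^ a else y ^ b with hc
    have hsnocm : altProd (x ^ a) (y ^ b) (m + 1) = altProd (x ^ a) (y ^ b) m * c :=
      altProd_snoc _ _ m
    have hparm : Even (m - 1) ↔ ¬ Even m := by
      rw [Nat.even_sub (by omega : 1 ≤ m)]
      simp
    have hsnocm1 : altProd (y ^ b) (x ^ a) m = altProd (y ^ b) (x ^ a) (m - 1) * c := by
      conv_lhs => rw [← hm1, altProd_snoc]
      congr 1
      by_cases hEm : Even m
      · rw [if_neg (fun h => (hparm.1 h) hEm), hc, if_pos hEm]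
      · rw [if_pos (hparm.2 hEm), hc, if_neg hEm]
    have hEQ : altProd (x ^ a) (y ^ b) (m + 1)
        = altProd (y ^ b) (x ^ a) (m - 1) * (c * c) := by
      rw [hsnocm, halt, hsnocm1, mul_assoc]
    have hccne : c * c ≠ 1 := by
      intro h0
      apply hcase
      have hEQ' : altProd (y ^ b) (x ^ a) (m - 1) = altProd (x ^ a) (y ^ b) (m + 1) := by
        rw [hEQ, h0, mul_one]
      have := sylLen_le_of_eq (sylWord_altList ht hs (m - 1))
        (show (altList (y ^ b) (x ^ a) (m - 1)).prod = _ from hEQ')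
      rw [altList_length] at this
      exact this
    have hccsyll : c * c ∈ Syll X := by
      by_cases hEm : Even m
      · exact ⟨x, hx, a + a, by rw [zpow_add, hc, if_pos hEm], hccne⟩
      · exact ⟨y, hy, b + b, by rw [zpow_add, hc, if_neg hEm], hccne⟩
    have hWBprod : (altList (y ^ b) (x ^ a) (m - 1) ++ [c * c]).prod
        = altProd (x ^ a) (y ^ b) (m + 1) := by
      rw [List.prod_append, List.prod_singleton]
      exact hEQ.symm
    have hWBred : Reduced X (altList (y ^ b) (x ^ a) (m - 1) ++ [c * c]) := by
      refine ⟨?_, ?_⟩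
      · intro u hu
        rcases List.mem_append.1 hu with hu | hu
        · exact sylWord_altList ht hs (m - 1) u hu
        · simp only [List.mem_singleton] at hu
          subst hu
          exact hccsyll
      · show _ = sylLen X ((altList (y ^ b) (x ^ a) (m - 1) ++ [c * c]).prod)
        rw [hWBprod, hhm]
        simp only [List.length_append, altList_length, List.length_cons, List.length_nil]
        omega
    have hchain := hPD.2 _ _ hWAred hWBred (hWAprod.trans hWBprod.symm)
    have hreach := reach_AB (fun w' hop => step_from_A hSM hx hy hxy ha hb hm hlen hop)
      (fun w' hop => step_from_A' hSM hx hy hxy ha hb hm hlen hop) hchain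
    have hBexp : altList (y ^ b) (x ^ a) (m - 1) ++ [c * c]
        = y ^ b :: (altList (x ^ a) (y ^ b) (m - 2) ++ [c * c]) := by
      rw [htail, List.cons_append]
    rcases hreach with hBA | hBA'
    · have := congrArg List.head? hBA
      rw [hBexp] at this
      simp only [List.head?_cons] at this
      have hyx : y ^ b = x ^ (a + a) := by
        rw [zpow_add]
        exact Option.some.inj this
      exact zpow_ne_zpow hSM hy hx hxy.symm hb (by rw [zpow_add] at hyx ⊢; exact hs2) hyx
    · rw [hBexp] at hBA'
      have htails : altList (x ^ a) (y ^ b) (m - 2) ++ [c * c]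
          = x ^ a * x ^ a :: altList (x ^ a) (y ^ b) (m - 2) :=
        (List.cons.injEq _ _ _ _ ▸ hBA').2
      have htail2 : altList (x ^ a) (y ^ b) (m - 2)
          = x ^ a :: altList (y ^ b) (x ^ a) (m - 3) := by
        rw [show m - 2 = (m - 3) + 1 from by omega]
        rfl
      rw [htail2, List.cons_append] at htails
      have hxx : x ^ a = x ^ a * x ^ a := (List.cons.injEq _ _ _ _ ▸ htails).1
      have h1x : (1 : G) * x ^ a = x ^ a * x ^ a := by rw [one_mul]; exact hxx
      exact ha (mul_right_cancel h1x).symm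

end KeyLemma
section OrderFacts
variable {G : Type*} [Group G]

lemma order_facts {x : G} {a : ℤ} (ha : x ^ a ≠ 1) (h2 : x ^ (2 * a) = 1) :
    orderOf x ≠ 0 ∧ Even (orderOf x) ∧
      a ≡ ((orderOf x / 2 : ℕ) : ℤ) [ZMOD (orderOf x : ℤ)] := by
  have hd2a : (orderOf x : ℤ) ∣ 2 * a := orderOf_dvd_iff_zpow_eq_one.2 h2
  have hda : ¬ (orderOf x : ℤ) ∣ a := fun h => ha (orderOf_dvd_iff_zpow_eq_one.1 h)
  set d := orderOf x with hd
  have hd0 : d ≠ 0 := by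
    intro h0
    rw [h0] at hd2a
    have h2a0 : (2 * a : ℤ) = 0 := by simpa using hd2a
    have ha0 : a = 0 := by omega
    exact hda (by rw [ha0]; exact dvd_zero _)
  have heven : Even d := by
    by_contra hoddc
    have hodd : Odd d := Nat.not_even_iff_odd.1 hoddc
    have h1 : d ∣ (2 * a).natAbs := by
      have := Int.natAbs_dvd_natAbs.mpr hd2a
      simpa using this
    have h1' : d ∣ 2 * a.natAbs := by
      rw [Int.natAbs_mul] at h1
      simpa using h1
    have hcop : Nat.Coprime d 2 := Nat.coprime_two_right.mpr hodd
    have h2' : d ∣ a.natAbs := hcop.dvd_of_dvd_mul_left h1'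
    exact hda (Int.natAbs_dvd_natAbs.mp (by simpa using h2'))
  obtain ⟨e, he⟩ := heven
  have he2 : d = 2 * e := by omega
  have hed : d / 2 = e := by omega
  have hea : (e : ℤ) ∣ a := by
    have h3 : ((2 : ℤ) * e) ∣ 2 * a := by
      have : ((d : ℕ) : ℤ) = 2 * e := by push_cast [he2]; ring
      rwa [this] at hd2a
    exact (mul_dvd_mul_iff_left (two_ne_zero (α := ℤ))).1 h3
  obtain ⟨q, hq⟩ := hea
  have hqodd : ¬ (2 : ℤ) ∣ q := by
    rintro ⟨r, hr⟩
    apply hda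
    refine ⟨r, ?_⟩
    rw [hq, hr]
    push_cast [he2]
    ring
  refine ⟨hd0, ⟨e, he⟩, ?_⟩
  rw [hed, Int.modEq_iff_dvd]
  obtain ⟨r, hr⟩ : (2 : ℤ) ∣ 1 - q := by
    rcases Int.even_or_odd q with hq2 | hq2
    · exact absurd (by rcases hq2 with ⟨t, ht⟩; exact ⟨t, by omega⟩) hqodd
    · rcases hq2 with ⟨t, ht⟩
      exact ⟨-t, by omega⟩
  refine ⟨r, ?_⟩
  rw [hq]
  push_cast [he2]
  linear_combination (e : ℤ) * hr

end OrderFacts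
theorem statement_1 {G : Type*} [Group G] {X : Set G}
    (hSM : StronglyMarked X) (hPD : PropertyD X)
    {x y : G} (hx : x ∈ X) (hy : y ∈ X) (hxy : x ≠ y)
    {a b : ℤ} (ha : x ^ a ≠ 1) (hb : y ^ b ≠ 1)
    {m : ℕ} (hm : 3 ≤ m) (hnc : x * y ≠ y * x)
    (halt : altProd (x ^ a) (y ^ b) m = altProd (y ^ b) (x ^ a) m)
    (hlen : sylLen X (altProd (x ^ a) (y ^ b) m) = m) :
    (orderOf x ≠ 0 ∧ Even (orderOf x) ∧ orderOf y ≠ 0 ∧ Even (orderOf y) ∧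
      a ≡ ((orderOf x / 2 : ℕ) : ℤ) [ZMOD (orderOf x : ℤ)] ∧
      b ≡ ((orderOf y / 2 : ℕ) : ℤ) [ZMOD (orderOf y : ℤ)]) ∧
    (∀ n : ℕ, 2 ≤ n →
      altProd (x ^ a) (y ^ b) n = altProd (y ^ b) (x ^ a) n →
      sylLen X (altProd (x ^ a) (y ^ b) n) = n → n = m) := by
  have hsq_x : x ^ a * x ^ a = 1 := square_one hSM hPD hx hy hxy ha hb hm halt hlen
  have hsq_y : y ^ b * y ^ b = 1 := by
    have hlen' : sylLen X (altProd (y ^ b) (x ^ a) m) = m := by rw [← halt]; exact hlen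
    exact square_one hSM hPD hy hx hxy.symm hb ha hm halt.symm hlen'
  have hx2 : x ^ (2 * a) = 1 := by rw [two_mul, zpow_add]; exact hsq_x
  have hy2 : y ^ (2 * b) = 1 := by rw [two_mul, zpow_add]; exact hsq_y
  obtain ⟨hxo, hxe, hxm⟩ := order_facts ha hx2
  obtain ⟨hyo, hye, hym⟩ := order_facts hb hy2
  refine ⟨⟨hxo, hxe, hyo, hye, hxm, hym⟩, fun n hn2 haltn hlenn => ?_⟩
  by_contra hne
  rcases Nat.lt_or_ge n m with hlt | hge
  · exact no_braid_below hx hy ha hb hn2 hlt hlen haltn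
  · exact no_braid_below hx hy ha hb (by omega : 2 ≤ m) (by omega : m < n) hlenn halt

end Paper
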